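/- If X and Y are closed subsemimodules of ℝ_max^n (with respect to the product topology induced by the metric d(a,b)=|exp(a)-exp(b)| on ℝ_max), then X ⊕ Y := {x ⊕ y : x ∈ X, y ∈ Y} is a closed subsemimodule of ℝ_max^n. -/

import Mathlib

/-!
Max-plus (tropical) framework.

The max-plus semiring `ℝ_max = ℝ ∪ {-∞}` is modelled as `WithBot ℝ`:
max-plus addition `a ⊕ b = max a b` is the lattice `⊔`, and max-plus
multiplication `a ⊙ b = a + b` is `+` (with `⊥ = -∞` absorbing).
The topology induced by the metric `d(a,b) = |exp a - exp b|` is the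
order topology.
-/

/-- The max-plus semiring `ℝ ∪ {-∞}`. -/
abbrev Rmax : Type := WithBot ℝ

/-- The topology of `ℝ_max` (the order topology, which coincides with the
topology induced by the metric `d(a,b) = |exp a - exp b|`). -/
instance : TopologicalSpace Rmax := Preorder.topology Rmax

instance : OrderTopology Rmax := ⟨rfl⟩

/-- Vectors with entries in a (max-plus-like) semiring `R`. -/
abbrev Vec (R : Type*) (n : ℕ) := Fin n → R

section Defs

variable {R : Type*} [LinearOrder R] [Add R] [OrderBot R]

/-- Max-plus scalar action on a vector: `(λ x)_i = λ ⊙ x_i = λ + x_i`. -/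
def sm {n : ℕ} (lam : R) (x : Vec R n) : Vec R n := fun i => lam + x i

/-- Max-plus matrix-vector product: `(A x)_i = ⊕_k A_{ik} ⊙ x_k = max_k (A_{ik} + x_k)`. -/
def mulVecMP {m n : ℕ} (A : Matrix (Fin m) (Fin n) R) (x : Vec R n) : Vec R m :=
  fun i => Finset.univ.sup fun k => A i k + x k

/-- A subsemimodule (max-plus cone) of `R^n`: a subset stable under
max-plus linear combinations `λ x ⊕ μ y`. -/
def IsSemimodule {n : ℕ} (K : Set (Vec R n)) : Prop :=
  ∀ x ∈ K, ∀ y ∈ K, ∀ lam mu : R, (sm lam x ⊔ sm mu y) ∈ K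

/-- Max-plus scalar action on a pair of vectors. -/
def smP {n : ℕ} (lam : R) (p : Vec R n × Vec R n) : Vec R n × Vec R n :=
  (sm lam p.1, sm lam p.2)

/-- A subsemimodule of `(R^n)²`. -/
def IsPairSemimodule {n : ℕ} (W : Set (Vec R n × Vec R n)) : Prop :=
  ∀ p ∈ W, ∀ q ∈ W, ∀ lam mu : R, (smP lam p ⊔ smP mu q) ∈ W

/-- A congruence on `R^n`: an equivalence relation which is a
subsemimodule of `(R^n)²`. -/
def IsCongruence {n : ℕ} (W : Set (Vec R n × Vec R n)) : Prop :=
  Equivalence (fun x y => (x, y) ∈ W) ∧ IsPairSemimodule W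

/-- The (max-plus) kernel of a matrix: `ker E = {(x,y) : E x = E y}`. -/
def kerM {p n : ℕ} (E : Matrix (Fin p) (Fin n) R) : Set (Vec R n × Vec R n) :=
  {w | mulVecMP E w.1 = mulVecMP E w.2}

/-- The image of a matrix: `Im E = {E x}`. -/
def imM {n q : ℕ} (E : Matrix (Fin n) (Fin q) R) : Set (Vec R n) :=
  {y | ∃ x : Vec R q, y = mulVecMP E x}

/-- `A W = {(A x, A y) : (x,y) ∈ W}` for a set of pairs `W`. -/
def mapCong {n : ℕ} (A : Matrix (Fin n) (Fin n) R) (W : Set (Vec R n × Vec R n)) :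
    Set (Vec R n × Vec R n) :=
  {p | ∃ w ∈ W, p = (mulVecMP A w.1, mulVecMP A w.2)}

/-- `A S = {A x : x ∈ S}`. -/
def mapSet {n : ℕ} (A : Matrix (Fin n) (Fin n) R) (S : Set (Vec R n)) : Set (Vec R n) :=
  {y | ∃ x ∈ S, y = mulVecMP A x}

/-- `A⁻¹ S = {x : A x ∈ S}`. -/
def invSet {n : ℕ} (A : Matrix (Fin n) (Fin n) R) (S : Set (Vec R n)) : Set (Vec R n) :=
  {x | mulVecMP A x ∈ S}

/-- `A⁻¹ U = {(x,y) : (A x, A y) ∈ U}` for a set of pairs `U`. -/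
def invPair {n : ℕ} (A : Matrix (Fin n) (Fin n) R) (U : Set (Vec R n × Vec R n)) :
    Set (Vec R n × Vec R n) :=
  {p | (mulVecMP A p.1, mulVecMP A p.2) ∈ U}

/-- The max-plus sum of two subsets of `R^n`: `X ⊕ Y = {x ⊕ y : x ∈ X, y ∈ Y}`. -/
def setSum {n : ℕ} (X Y : Set (Vec R n)) : Set (Vec R n) :=
  {z | ∃ x ∈ X, ∃ y ∈ Y, z = x ⊔ y}

/-- The max-plus sum of two subsets of `(R^n)²`. -/
def pairSum {n : ℕ} (X Y : Set (Vec R n × Vec R n)) : Set (Vec R n × Vec R n) :=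
  {z | ∃ x ∈ X, ∃ y ∈ Y, z = x ⊔ y}

/-- `W` is `(C,A)`-conditioned invariant: `A (W ∩ ker C) ⊆ W`. -/
def CondInv {n q : ℕ} (C : Matrix (Fin q) (Fin n) R) (A : Matrix (Fin n) (Fin n) R)
    (W : Set (Vec R n × Vec R n)) : Prop :=
  mapCong A (W ∩ kerM C) ⊆ W

/-- `X` is `(A,B)`-controlled invariant: `A X ⊆ X ⊕ Im B`. -/
def ContrInv {n q : ℕ} (A : Matrix (Fin n) (Fin n) R) (B : Matrix (Fin n) (Fin q) R)
    (X : Set (Vec R n)) : Prop :=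
  mapSet A X ⊆ setSum X (imM B)

/-- The max-plus scalar product `uᵗ v = ⊕_i u_i ⊙ v_i = max_i (u_i + v_i)`. -/
def dotMP {n : ℕ} (u v : Vec R n) : R := Finset.univ.sup fun i => u i + v i

/-- The orthogonal of a semimodule `X ⊆ R^n`:
`X^⊥ = {(x,y) : xᵗ z = yᵗ z, ∀ z ∈ X}`. -/
def orthS {n : ℕ} (X : Set (Vec R n)) : Set (Vec R n × Vec R n) :=
  {p | ∀ z ∈ X, dotMP p.1 z = dotMP p.2 z}

/-- The orthogonal of a congruence (or set of pairs) `W ⊆ (R^n)²`: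
`W^⊤ = {z : xᵗ z = yᵗ z, ∀ (x,y) ∈ W}`. -/
def orthC {n : ℕ} (W : Set (Vec R n × Vec R n)) : Set (Vec R n) :=
  {z | ∀ p ∈ W, dotMP p.1 z = dotMP p.2 z}

/-- The smallest congruence containing a set `S ⊆ (R^n)²`. -/
def spanCong {n : ℕ} (S : Set (Vec R n × Vec R n)) : Set (Vec R n × Vec R n) :=
  ⋂₀ {W | IsCongruence W ∧ S ⊆ W}

/-- The smallest semimodule containing a set `S ⊆ R^n`. -/
def spanSet {n : ℕ} (S : Set (Vec R n)) : Set (Vec R n) :=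
  ⋂₀ {K | IsSemimodule K ∧ S ⊆ K}

end Defs


noncomputable instance : ConditionallyCompleteLinearOrder Rmax :=
  { WithBot.conditionallyCompleteLattice, WithBot.linearOrder with
    csSup_of_not_bddAbove := fun s hs => by
      rw [WithBot.sSup_empty]
      show sSup s = ⊥
      simp only [sSup, SupSet.sSup, sInf, InfSet.sInf]
      rw [if_pos (Or.inr ?_)]
      · exact fun h => hs h
    csInf_of_not_bddBelow := fun s hs => absurd (OrderBot.bddBelow s) hs }

lemma sm_sup' {n : ℕ} (lam : Rmax) (x y : Vec Rmax n) :
    sm lam (x ⊔ y) = sm lam x ⊔ sm lam y := by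
  funext i
  simp only [sm, Pi.sup_apply]
  exact (max_add_add_left lam (x i) (y i)).symm

/-- If `X` and `Y` are closed subsemimodules of `ℝ_max^n`,
then `X ⊕ Y = {x ⊕ y : x ∈ X, y ∈ Y}` is a closed subsemimodule of `ℝ_max^n`. -/
theorem sum_of_closed_semimodules_is_closed_semimodule
    {n : ℕ} (X Y : Set (Vec Rmax n))
    (hX : IsSemimodule X) (hY : IsSemimodule Y)
    (hXc : IsClosed X) (hYc : IsClosed Y) :
    IsClosed (setSum X Y) ∧ IsSemimodule (setSum X Y) := by
  constructor
  · refine isClosed_of_closure_subset ?_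
    intro z hz
    classical
    set c : Vec Rmax n := fun i => ((WithBot.unbotD 0 (z i) + 1 : ℝ) : Rmax) with hc
    have hzc : ∀ i, z i < c i := by
      intro i
      show z i < ((WithBot.unbotD 0 (z i) + 1 : ℝ) : Rmax)
      cases hzi : z i with
      | none => exact WithBot.bot_lt_coe _
      | some r =>
        show (r : Rmax) < ((r + 1 : ℝ) : Rmax)
        exact_mod_cast lt_add_one r
    set I : Set (Vec Rmax n) := {v | ∀ i, v i ≤ c i} with hI
    have hIcomp : IsCompact I := by
      have h1 : I = Set.pi Set.univ (fun i => Set.Iic (c i)) := by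
        ext v; simp [hI, Set.mem_pi, Pi.le_def]
      rw [h1]
      exact isCompact_univ_pi fun i => by rw [← Set.Icc_bot]; exact isCompact_Icc
    set K : Set (Vec Rmax n × Vec Rmax n) := (X ∩ I) ×ˢ (Y ∩ I) with hKdef
    have hK : IsCompact K := (hIcomp.inter_left hXc).prod (hIcomp.inter_left hYc)
    have hf : Continuous (fun p : Vec Rmax n × Vec Rmax n => p.1 ⊔ p.2) := by
      refine continuous_pi fun i => ?_
      simp only [Pi.sup_apply]
      exact ((continuous_apply i).comp continuous_fst).max
        ((continuous_apply i).comp continuous_snd)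
    have himg : IsCompact ((fun p : Vec Rmax n × Vec Rmax n => p.1 ⊔ p.2) '' K) :=
      hK.image hf
    set U : Set (Vec Rmax n) := {w | ∀ i, w i < c i} with hUdef
    have hU : IsOpen U := by
      have h2 : U = ⋂ i, (fun w : Vec Rmax n => w i) ⁻¹' Set.Iio (c i) := by
        ext w; simp [hUdef]
      rw [h2]
      exact isOpen_iInter_of_finite fun i => isOpen_Iio.preimage (continuous_apply i)
    have hzU : z ∈ U := hzc
    have hsub : setSum X Y ∩ U ⊆ (fun p : Vec Rmax n × Vec Rmax n => p.1 ⊔ p.2) '' K := by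
      rintro w ⟨⟨x, hx, y, hy, rfl⟩, hwU⟩
      refine ⟨(x, y), ⟨⟨hx, fun i => ?_⟩, ⟨hy, fun i => ?_⟩⟩, rfl⟩
      · exact le_of_lt (lt_of_le_of_lt (le_sup_left : x i ≤ (x ⊔ y) i) (hwU i))
      · exact le_of_lt (lt_of_le_of_lt (le_sup_right : y i ≤ (x ⊔ y) i) (hwU i))
    have hz2 : z ∈ closure (setSum X Y ∩ U) := by
      rw [mem_closure_iff] at hz ⊢
      intro o ho hzo
      obtain ⟨w, hw1, hw2⟩ := hz (o ∩ U) (ho.inter hU) ⟨hzo, hzU⟩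
      exact ⟨w, hw1.1, hw2, hw1.2⟩
    have hz3 : z ∈ (fun p : Vec Rmax n × Vec Rmax n => p.1 ⊔ p.2) '' K :=
      himg.isClosed.closure_subset ((closure_mono hsub) hz2)
    obtain ⟨⟨x, y⟩, ⟨⟨hx, -⟩, hy, -⟩, rfl⟩ := hz3
    exact ⟨x, hx, y, hy, rfl⟩
  · rintro p ⟨x1, hx1, y1, hy1, rfl⟩ q ⟨x2, hx2, y2, hy2, rfl⟩ lam mu
    refine ⟨sm lam x1 ⊔ sm mu x2, hX _ hx1 _ hx2 lam mu,
      sm lam y1 ⊔ sm mu y2, hY _ hy1 _ hy2 lam mu, ?_⟩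
    rw [sm_sup', sm_sup', sup_sup_sup_comm]
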